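/- arXiv:2012.04115 — 4 statements merged into one kernel-verified Lean document; each statement's English description precedes it below -/
import Mathlib

section
/- Let X be a random variable with values in [0, E] for some E < 1, mean μ and variance σ². Then E[−log(1−X)] ≤ μ + σ² + μ² + (σ²/(0.6 − μ)²)·(−log(1−E)), provided μ < 0.6. -/
open MeasureTheory

lemma explog {x : ℝ} (h0 : 0 ≤ x) (h6 : x ≤ 0.6) : -Real.log (1-x) ≤ x + x^2 := by
  have hx1 : (0:ℝ) < 1 - x := by norm_num at h6 ⊢; linarith
  set s := x + x^2 with hs_def
  have hs : 0 ≤ s := by positivity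
  have hT : 1 + s + s^2/2 + s^3/6 ≤ Real.exp s := by
    have h := Real.sum_le_exp_of_nonneg hs 4
    simp [Finset.sum_range_succ, Nat.factorial] at h
    linarith
  have key : 1 ≤ (1-x) * (1 + s + s^2/2 + s^3/6) := by
    rw [hs_def]; norm_num at h6; nlinarith [pow_nonneg h0 2, pow_nonneg h0 3, pow_nonneg h0 4, pow_nonneg h0 5, sq_nonneg x, mul_nonneg h0 h0]
  have hep := Real.exp_pos s
  have h2 : 1 ≤ (1-x) * Real.exp s := by nlinarith
  have h1 : Real.exp (-s) ≤ 1 - x := by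
    rw [Real.exp_neg]
    calc (Real.exp s)⁻¹ = 1 * (Real.exp s)⁻¹ := (one_mul _).symm
    _ ≤ ((1-x) * Real.exp s) * (Real.exp s)⁻¹ := by
        apply mul_le_mul_of_nonneg_right h2 (by positivity)
    _ = 1 - x := by field_simp
  have := Real.log_le_log (Real.exp_pos _) h1
  rw [Real.log_exp] at this
  linarith

lemma ptwise {x μ E : ℝ} (h0 : 0 ≤ x) (hxE : x ≤ E) (hE : E < 1)
    (hμ : μ < 0.6) :
    -Real.log (1-x) ≤ x + x^2 + ((x-μ)^2/(0.6-μ)^2) * (-Real.log (1-E)) := by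
  have hE0 : 0 ≤ E := le_trans h0 hxE
  have hlogE : 0 ≤ -Real.log (1-E) := by
    have : Real.log (1-E) ≤ 0 := Real.log_nonpos (by linarith) (by linarith)
    linarith
  have hd6 : (0:ℝ) < 0.6 - μ := by linarith
  have hd : (0:ℝ) < (0.6-μ)^2 := by positivity
  by_cases hx6 : x ≤ 0.6
  · have h1 := explog h0 hx6
    have h2 : 0 ≤ ((x-μ)^2/(0.6-μ)^2) * (-Real.log (1-E)) := by positivity
    linarith
  · push_neg at hx6
    have hlog : -Real.log (1-x) ≤ -Real.log (1-E) := by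
      have := Real.log_le_log (by linarith : (0:ℝ) < 1-E) (by linarith : 1-E ≤ 1-x)
      linarith
    have hr : 1 ≤ (x-μ)^2/(0.6-μ)^2 := by
      rw [le_div_iff₀ hd]
      nlinarith
    nlinarith [pow_nonneg h0 2]

/-- Chebyshev-based bound: for X valued in [0,E], E < 1, with mean μ < 0.6 and
variance σ², E[-log(1-X)] ≤ μ + σ² + μ² + (σ²/(0.6-μ)²)·(-log(1-E)). -/
theorem stmt_5 {Ω : Type*} [MeasurableSpace Ω] (P : Measure Ω) [IsProbabilityMeasure P]
    (X : Ω → ℝ) (E : ℝ) (hE : E < 1)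
    (hX0 : ∀ ω, 0 ≤ X ω) (hXE : ∀ ω, X ω ≤ E) (hXm : Measurable X)
    (μ σ2 : ℝ) (hμ : μ = ∫ ω, X ω ∂P) (hσ2 : σ2 = ∫ ω, (X ω - μ) ^ 2 ∂P)
    (hμ06 : μ < 0.6) :
    ∫ ω, -Real.log (1 - X ω) ∂P ≤
      μ + σ2 + μ ^ 2 + (σ2 / (0.6 - μ) ^ 2) * (-Real.log (1 - E)) := by
  have hne : Nonempty Ω := MeasureTheory.Measure.nonempty_of_neZero P
  obtain ⟨ω₀⟩ := hne
  have hE0 : 0 ≤ E := le_trans (hX0 ω₀) (hXE ω₀)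
  set L : ℝ := -Real.log (1 - E) with hL
  have hL0 : 0 ≤ L := by
    have : Real.log (1-E) ≤ 0 := Real.log_nonpos (by linarith) (by linarith)
    simp [hL]; linarith
  -- integrabilities
  have hiX : Integrable X P := by
    refine Integrable.mono' (integrable_const E) hXm.aestronglyMeasurable ?_
    exact ae_of_all _ fun ω => by
      rw [Real.norm_eq_abs, abs_of_nonneg (hX0 ω)]; exact hXE ω
  have hiX2 : Integrable (fun ω => X ω ^ 2) P := by
    refine Integrable.mono' (integrable_const (E^2)) (hXm.pow_const 2).aestronglyMeasurable ?_
    exact ae_of_all _ fun ω => by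
      rw [Real.norm_eq_abs, abs_of_nonneg (by positivity)]
      exact pow_le_pow_left₀ (hX0 ω) (hXE ω) 2
  have hiV : Integrable (fun ω => (X ω - μ) ^ 2) P := by
    have : (fun ω => (X ω - μ)^2) = fun ω => X ω^2 - (2*μ)*X ω + μ^2 := by
      funext ω; ring
    rw [this]
    exact (hiX2.sub (hiX.const_mul (2*μ))).add (integrable_const _)
  have hiL : Integrable (fun ω => -Real.log (1 - X ω)) P := by
    refine Integrable.mono' (integrable_const L) ?_ ?_
    · exact ((measurable_const.sub hXm).log.neg).aestronglyMeasurable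
    · refine ae_of_all _ fun ω => ?_
      have h1 : Real.log (1 - X ω) ≤ 0 :=
        Real.log_nonpos (by linarith [hX0 ω, hXE ω]) (by linarith [hX0 ω])
      have h2 : Real.log (1-E) ≤ Real.log (1 - X ω) :=
        Real.log_le_log (by linarith) (by linarith [hXE ω])
      rw [Real.norm_eq_abs, abs_of_nonneg (by linarith)]
      simp only [hL]; linarith
  have hiG : Integrable (fun ω => X ω + X ω^2 + ((X ω - μ)^2/(0.6-μ)^2) * L) P := by
    exact (hiX.add hiX2).add ((hiV.div_const _).mul_const _)
  -- pointwise bound and monotonicity of integral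
  have hmono := integral_mono hiL hiG
    (fun ω => ptwise (hX0 ω) (hXE ω) hE hμ06)
  -- compute the right integral
  have hconst : ∫ (_ : Ω), μ^2 ∂P = μ^2 := by
    simp [measure_univ]
  have h2μ : Integrable (fun ω => 2*μ*X ω) P := hiX.const_mul _
  have hsub : Integrable (fun ω => X ω^2 - 2*μ*X ω) P := hiX2.sub h2μ
  have hX2val : ∫ ω, X ω ^ 2 ∂P = σ2 + μ^2 := by
    have expand : (fun ω => (X ω - μ)^2) = fun ω => X ω^2 - 2*μ*X ω + μ^2 := by
      funext ω; ring
    rw [expand] at hσ2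
    rw [integral_add hsub (integrable_const _),
      integral_sub hiX2 h2μ, integral_const_mul, hconst] at hσ2
    rw [← hμ] at hσ2
    linarith
  have hterm : ∫ ω, ((X ω - μ)^2/(0.6-μ)^2) * L ∂P = (σ2 / (0.6-μ)^2) * L := by
    have : (fun ω => ((X ω - μ)^2/(0.6-μ)^2) * L) = fun ω => (L/(0.6-μ)^2) * (X ω - μ)^2 := by
      funext ω; ring
    rw [this, integral_const_mul, ← hσ2]; ring
  have hiXX2 : Integrable (fun ω => X ω + X ω^2) P := hiX.add hiX2
  have hiT : Integrable (fun ω => ((X ω - μ)^2/(0.6-μ)^2) * L) P := (hiV.div_const _).mul_const _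
  rw [integral_add hiXX2 hiT, integral_add hiX hiX2, ← hμ, hX2val, hterm] at hmono
  linarith
end

section
/- Assume the expected generalization error of the Bayesian posterior satisfies ⟨ε(m)⟩ ~ b·m^{−α} with 0 < α < 1, and that the per-point posterior error P_e(m) is uniformly bounded by some E < 1 with Var(P_e(m)) = o(⟨ε(m)⟩). Then the expected negative log marginal likelihood satisfies −⟨log P(S_m)⟩ ~ (b/(1−α))·m^{1−α} as m → ∞, and hence −⟨log P(S_m)⟩/m ~ (1/(1−α))·⟨ε(m)⟩. -/
open MeasureTheory Filter Asymptotics Finset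

theorem aux_pt_bounds {x Eb : ℝ} (hx : x ≤ Eb) (hE : Eb < 1) :
    x ≤ -Real.log (1 - x) ∧ -Real.log (1 - x) ≤ x + x^2 / (1 - Eb) := by
  have hx1 : x < 1 := lt_of_le_of_lt hx hE
  have h1x : 0 < 1 - x := by linarith
  have hEb : 0 < 1 - Eb := by linarith
  constructor
  · have := Real.log_le_sub_one_of_pos h1x
    linarith
  · have h2 := Real.log_le_sub_one_of_pos (inv_pos.mpr h1x)
    rw [Real.log_inv] at h2
    have heq : (1 - x)⁻¹ - 1 = x + x^2 / (1 - x) := by field_simp; ring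
    rw [heq] at h2
    have h3 : x^2 / (1 - x) ≤ x^2 / (1 - Eb) :=
      div_le_div_of_nonneg_left (sq_nonneg x) hEb (by linarith)
    linarith

theorem aux_mvt_bounds {α : ℝ} (hα0 : 0 < α) (hα1 : α < 1) {x : ℝ} (hx : 1 ≤ x) :
    (1 - α) * (x + 1) ^ (-α) ≤ (x + 1) ^ (1 - α) - x ^ (1 - α) ∧
    (x + 1) ^ (1 - α) - x ^ (1 - α) ≤ (1 - α) * x ^ (-α) := by
  have hx0 : (0:ℝ) < x := by linarith
  have hd : ∀ y ∈ Set.Icc x (x + 1), HasDerivAt (fun z : ℝ => z ^ (1 - α))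
      ((1 - α) * y ^ (-α)) y := by
    intro y hy
    have hy0 : y ≠ 0 := by have h1 := hy.1; intro h; rw [h] at h1; linarith
    have := Real.hasDerivAt_rpow_const (x := y) (p := 1 - α) (Or.inl hy0)
    simpa [show (1 : ℝ) - α - 1 = -α by ring] using this
  obtain ⟨c, hc, hceq⟩ := exists_hasDerivAt_eq_slope (fun z : ℝ => z ^ (1 - α))
    (fun y => (1 - α) * y ^ (-α)) (by linarith : x < x + 1)
    (fun y hy => (hd y hy).continuousAt.continuousWithinAt)
    (fun y hy => hd y (Set.mem_Icc_of_Ioo hy))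
  simp only [add_sub_cancel_left, div_one] at hceq
  have hc0 : 0 < c := lt_trans hx0 hc.1
  have h1 : (x+1) ^ (-α) ≤ c ^ (-α) :=
    Real.rpow_le_rpow_of_nonpos hc0 hc.2.le (by linarith)
  have h2 : c ^ (-α) ≤ x ^ (-α) :=
    Real.rpow_le_rpow_of_nonpos hx0 hc.1.le (by linarith)
  constructor
  · rw [← hceq]; nlinarith
  · rw [← hceq]; nlinarith

theorem aux_sum_ratio_tendsto_one {a d : ℕ → ℝ} (hd0 : ∀ k, 0 ≤ d k)
    (hdpos : ∀ᶠ k in atTop, d k ≠ 0)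
    (hsum : Tendsto (fun n => ∑ i ∈ range n, d i) atTop atTop)
    (h : Tendsto (fun k => a k / d k) atTop (nhds 1)) :
    Tendsto (fun n => (∑ i ∈ range n, a i) / (∑ i ∈ range n, d i)) atTop (nhds 1) := by
  have hequiv : a ~[atTop] d := (isEquivalent_iff_tendsto_one hdpos).2 h
  have hlo : (fun k => a k - d k) =o[atTop] d := hequiv
  have hsumlo := hlo.sum_range hd0 hsum
  have heq : (fun n => ∑ i ∈ range n, (a i - d i)) =
      fun n => (∑ i ∈ range n, a i) - ∑ i ∈ range n, d i := by
    funext n; rw [Finset.sum_sub_distrib]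
  rw [heq] at hsumlo
  have hequiv2 : (fun n => ∑ i ∈ range n, a i) ~[atTop] fun n => ∑ i ∈ range n, d i := hsumlo
  refine (isEquivalent_iff_tendsto_one ?_).1 hequiv2
  filter_upwards [hsum.eventually_gt_atTop 0] with n hn
  exact hn.ne'

/-- Theorem 2 (asymptotic optimality of the marginal-likelihood PAC-Bayes bound):
if the expected error ⟨ε(m)⟩ ~ b·m^(-α) with 0 < α < 1, the per-point posterior
error P_e(m) is uniformly bounded by E < 1 and Var(P_e(m)) = o(⟨ε(m)⟩), then
-⟨log P(S_m)⟩ ~ (b/(1-α))·m^(1-α), and -⟨log P(S_m)⟩/m ~ (1/(1-α))·⟨ε(m)⟩. -/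
theorem stmt_8 {Ω : Type*} [MeasurableSpace Ω] (μ : Measure Ω) [IsProbabilityMeasure μ]
    (PS : ℕ → Ω → ℝ) (Pe : ℕ → Ω → ℝ) (E b α : ℝ)
    (hE : E < 1) (hb : 0 < b) (hα0 : 0 < α) (hα1 : α < 1)
    (hPS0 : ∀ ω, PS 0 ω = 1)
    (hPSpos : ∀ m ω, 0 < PS m ω)
    (hchain : ∀ m ω, PS (m + 1) ω = PS m ω * (1 - Pe m ω))
    (hPe0 : ∀ m ω, 0 ≤ Pe m ω) (hPeE : ∀ m ω, Pe m ω ≤ E)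
    (hPemeas : ∀ m, Measurable (Pe m))
    (eps : ℕ → ℝ) (heps : ∀ m, eps m = ∫ ω, Pe m ω ∂μ)
    (hepspos : ∀ m, 0 < eps m)
    (hasym : Tendsto (fun m : ℕ => eps m / (b * (m : ℝ) ^ (-α))) atTop (nhds 1))
    (hvar : Tendsto (fun m : ℕ => (∫ ω, (Pe m ω - eps m) ^ 2 ∂μ) / eps m)
      atTop (nhds 0)) :
    Tendsto (fun m : ℕ =>
        (-∫ ω, Real.log (PS m ω) ∂μ) / ((b / (1 - α)) * (m : ℝ) ^ (1 - α)))
      atTop (nhds 1) ∧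
    Tendsto (fun m : ℕ =>
        ((-∫ ω, Real.log (PS m ω) ∂μ) / m) / ((1 / (1 - α)) * eps m))
      atTop (nhds 1) := by
  have h1α : (0:ℝ) < 1 - α := by linarith
  -- Ω is nonempty, hence 0 ≤ E
  have hΩ : Nonempty Ω := by
    by_contra h
    have : IsEmpty Ω := not_nonempty_iff.1 h
    have h0 : μ Set.univ = 0 := by
      rw [Set.univ_eq_empty_iff.mpr this]; exact measure_empty
    have h1 : μ Set.univ = 1 := measure_univ
    rw [h0] at h1; exact zero_ne_one h1
  obtain ⟨ω₀⟩ := hΩ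
  have hE0 : 0 ≤ E := le_trans (hPe0 0 ω₀) (hPeE 0 ω₀)
  have h1E : (0:ℝ) < 1 - E := by linarith
  -- integrability helper
  have integ : ∀ (g : Ω → ℝ) (C : ℝ), Measurable g → (∀ ω, ‖g ω‖ ≤ C) → Integrable g μ :=
    fun g C hm hbd => ⟨hm.aestronglyMeasurable, HasFiniteIntegral.of_bounded (ae_of_all μ hbd)⟩
  have iPe : ∀ k, Integrable (Pe k) μ := by
    intro k
    refine integ (Pe k) E (hPemeas k) fun ω => ?_
    rw [Real.norm_of_nonneg (hPe0 k ω)]; exact hPeE k ω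
  have iPe2 : ∀ k, Integrable (fun ω => Pe k ω ^ 2) μ := by
    intro k
    refine integ _ (E ^ 2) ((hPemeas k).pow_const 2) fun ω => ?_
    rw [Real.norm_of_nonneg (sq_nonneg _)]
    exact pow_le_pow_left₀ (hPe0 k ω) (hPeE k ω) 2
  have hepsE : ∀ k, eps k ≤ E := by
    intro k
    rw [heps k]
    calc ∫ ω, Pe k ω ∂μ ≤ ∫ _, E ∂μ :=
          integral_mono (iPe k) (integrable_const E) fun ω => hPeE k ω
      _ = E := by simp
  have iVar : ∀ k, Integrable (fun ω => (Pe k ω - eps k) ^ 2) μ := by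
    intro k
    refine integ _ (E ^ 2) (((hPemeas k).sub measurable_const).pow_const 2) fun ω => ?_
    rw [Real.norm_of_nonneg (sq_nonneg _)]
    have h1 := hPe0 k ω; have h2 := hPeE k ω
    have h3 := (hepspos k).le; have h4 := hepsE k
    nlinarith
  have ilog : ∀ k, Integrable (fun ω => Real.log (1 - Pe k ω)) μ := by
    intro k
    refine integ _ (E + E ^ 2 / (1 - E))
      (Real.measurable_log.comp (measurable_const.sub (hPemeas k))) fun ω => ?_
    obtain ⟨hl, hu⟩ := aux_pt_bounds (hPeE k ω) hE
    have h0 : 0 ≤ -Real.log (1 - Pe k ω) := le_trans (hPe0 k ω) hl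
    rw [Real.norm_eq_abs, abs_le]
    constructor
    · have hsq : Pe k ω ^ 2 ≤ E ^ 2 := pow_le_pow_left₀ (hPe0 k ω) (hPeE k ω) 2
      have hdv : Pe k ω ^ 2 / (1 - E) ≤ E ^ 2 / (1 - E) := (div_le_div_iff_of_pos_right h1E).mpr hsq
      have := hPeE k ω
      linarith [div_nonneg (sq_nonneg E) h1E.le, div_nonneg (sq_nonneg (Pe k ω)) h1E.le]
    · have hlog := Real.log_nonpos (by linarith [hPeE k ω] : (0:ℝ) ≤ 1 - Pe k ω)
        (by linarith [hPe0 k ω] : 1 - Pe k ω ≤ 1)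
      linarith [div_nonneg (sq_nonneg E) h1E.le]
  -- a k : expected one-step log-loss
  set a : ℕ → ℝ := fun k => ∫ ω, -Real.log (1 - Pe k ω) ∂μ with ha_def
  -- L m = ∑_{k<m} a k
  have hPSlog : ∀ m ω, Real.log (PS m ω) = ∑ k ∈ range m, Real.log (1 - Pe k ω) := by
    intro m ω
    induction m with
    | zero => simp [hPS0]
    | succ n ih =>
      rw [Finset.sum_range_succ, ← ih, hchain,
        Real.log_mul (hPSpos n ω).ne'
          (show (0:ℝ) < 1 - Pe n ω by linarith [hPeE n ω]).ne']
  have hL : ∀ m, (-∫ ω, Real.log (PS m ω) ∂μ) = ∑ k ∈ range m, a k := by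
    intro m
    have : (∫ ω, Real.log (PS m ω) ∂μ) = ∑ k ∈ range m, ∫ ω, Real.log (1 - Pe k ω) ∂μ := by
      rw [← integral_finset_sum _ fun k _ => ilog k]
      exact integral_congr_ae (ae_of_all μ fun ω => hPSlog m ω)
    rw [this, ← Finset.sum_neg_distrib]
    refine Finset.sum_congr rfl fun k _ => ?_
    rw [ha_def]
    simp [integral_neg]
  -- V k and moment identity
  set V : ℕ → ℝ := fun k => ∫ ω, (Pe k ω - eps k) ^ 2 ∂μ with hV_def
  have hmom : ∀ k, (∫ ω, Pe k ω ^ 2 ∂μ) = V k + eps k ^ 2 := by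
    intro k
    have hexp : ∀ ω, (Pe k ω - eps k) ^ 2 = Pe k ω ^ 2 - (2 * eps k) * Pe k ω + eps k ^ 2 := by
      intro ω; ring
    have : V k = (∫ ω, Pe k ω ^ 2 ∂μ) - (2 * eps k) * eps k + eps k ^ 2 := by
      have i2 : Integrable (fun ω => (2 * eps k) * Pe k ω) μ := (iPe k).const_mul _
      have i1 : Integrable (fun ω => Pe k ω ^ 2 - (2 * eps k) * Pe k ω) μ := (iPe2 k).sub i2
      rw [hV_def]
      simp only [hexp]
      rw [integral_add i1 (integrable_const _), integral_sub (iPe2 k) i2, integral_const_mul]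
      simp [← heps k]
    rw [this]; ring
  -- Step 1 : a k / eps k → 1
  have ha_lower : ∀ k, eps k ≤ a k := by
    intro k
    rw [heps k, ha_def]
    exact integral_mono (iPe k) (ilog k).neg fun ω => (aux_pt_bounds (hPeE k ω) hE).1
  have ha_upper : ∀ k, a k ≤ eps k + (V k + eps k ^ 2) / (1 - E) := by
    intro k
    have h1 : a k ≤ ∫ ω, (Pe k ω + Pe k ω ^ 2 / (1 - E)) ∂μ := by
      rw [ha_def]
      exact integral_mono (ilog k).neg ((iPe k).add ((iPe2 k).div_const _))
        fun ω => (aux_pt_bounds (hPeE k ω) hE).2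
    have h2 : (∫ ω, (Pe k ω + Pe k ω ^ 2 / (1 - E)) ∂μ)
        = eps k + (V k + eps k ^ 2) / (1 - E) := by
      rw [integral_add (iPe k) ((iPe2 k).div_const _), integral_div, hmom k, ← heps k]
    linarith
  have heps0 : Tendsto eps atTop (nhds 0) := by
    have hc0 : Tendsto (fun m : ℕ => b * (m : ℝ) ^ (-α)) atTop (nhds 0) := by
      have := (tendsto_rpow_neg_atTop hα0).comp tendsto_natCast_atTop_atTop
      simpa using this.const_mul b
    have := hasym.mul hc0
    rw [mul_zero] at this
    refine this.congr' ?_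
    filter_upwards [eventually_ge_atTop 1] with m hm
    have hm0 : (0:ℝ) < (m:ℝ) := by exact_mod_cast hm
    have : b * (m : ℝ) ^ (-α) ≠ 0 := (mul_pos hb (Real.rpow_pos_of_pos hm0 _)).ne'
    field_simp
  have step1 : Tendsto (fun k => a k / eps k) atTop (nhds 1) := by
    have hup : Tendsto (fun k => 1 + (V k / eps k + eps k) / (1 - E)) atTop (nhds 1) := by
      have := ((hvar.add heps0).div_const (1 - E)).const_add (1:ℝ)
      simpa using this
    refine tendsto_of_tendsto_of_tendsto_of_le_of_le tendsto_const_nhds hup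
      (fun k => (one_le_div (hepspos k)).2 (ha_lower k)) fun k => ?_
    rw [div_le_iff₀ (hepspos k)]
    have hgoal : (1 + (V k / eps k + eps k) / (1 - E)) * eps k
        = eps k + (V k + eps k ^ 2) / (1 - E) := by
      field_simp [(hepspos k).ne']
    rw [hgoal]
    exact ha_upper k
  -- the comparison sequence d
  set d : ℕ → ℝ := fun k => (b / (1 - α)) * (((k : ℝ) + 1) ^ (1 - α) - (k : ℝ) ^ (1 - α))
    with hd_def
  have hba : 0 < b / (1 - α) := div_pos hb h1α
  have hdpos : ∀ k, 0 < d k := by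
    intro k
    refine mul_pos hba (sub_pos.2 ?_)
    exact Real.rpow_lt_rpow (Nat.cast_nonneg k) (by linarith) h1α
  have hdsum : ∀ n, (∑ i ∈ range n, d i) = (b / (1 - α)) * (n : ℝ) ^ (1 - α) := by
    intro n
    rw [← Finset.mul_sum]
    congr 1
    have h := Finset.sum_range_sub (f := fun k : ℕ => ((k : ℝ)) ^ (1 - α)) n
    have hz : ((0 : ℕ) : ℝ) ^ (1 - α) = 0 := by
      rw [Nat.cast_zero]; exact Real.zero_rpow h1α.ne'
    rw [hz, sub_zero] at h
    rw [← h]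
    refine Finset.sum_congr rfl fun k _ => ?_
    push_cast
    ring_nf
  have hdatTop : Tendsto (fun n => ∑ i ∈ range n, d i) atTop atTop := by
    have : Tendsto (fun n : ℕ => (n : ℝ) ^ (1 - α)) atTop atTop :=
      (tendsto_rpow_atTop h1α).comp tendsto_natCast_atTop_atTop
    have := this.const_mul_atTop hba
    refine this.congr fun n => (hdsum n).symm
  -- Step 3 : d k / (b k^(-α)) → 1
  have hd_ratio : Tendsto (fun k : ℕ => d k / (b * (k : ℝ) ^ (-α))) atTop (nhds 1) := by
    have hg : Tendsto (fun k : ℕ => (((k : ℝ) + 1) / (k : ℝ)) ^ (-α)) atTop (nhds 1) := by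
      have h1 : Tendsto (fun k : ℕ => ((k : ℝ) + 1) / (k : ℝ)) atTop (nhds 1) := by
        have := (tendsto_const_nhds (x := (1:ℝ)) (f := atTop)).add
          tendsto_inv_atTop_nhds_zero_nat
        rw [add_zero] at this
        refine this.congr' ?_
        filter_upwards [eventually_ge_atTop 1] with k hk
        have hk0 : ((k:ℝ)) ≠ 0 := by positivity
        field_simp
      have hc := (Real.continuousAt_rpow_const 1 (-α) (Or.inl one_ne_zero)).tendsto
      have := hc.comp h1
      simpa [Real.one_rpow, Function.comp_def] using this
    have hg' : Tendsto (fun k : ℕ => ((k : ℝ) + 1) ^ (-α) / (k : ℝ) ^ (-α)) atTop (nhds 1) := by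
      refine hg.congr' ?_
      filter_upwards [eventually_ge_atTop 1] with k hk
      have hk0 : (0:ℝ) < (k:ℝ) := by exact_mod_cast hk
      rw [Real.div_rpow (by positivity) hk0.le]
    refine tendsto_of_tendsto_of_tendsto_of_le_of_le' hg' tendsto_const_nhds ?_ ?_
    · filter_upwards [eventually_ge_atTop 1] with k hk
      have hk1 : (1:ℝ) ≤ (k:ℝ) := by exact_mod_cast hk
      have hk0 : (0:ℝ) < (k:ℝ) := by linarith
      have ht : (0:ℝ) < (k:ℝ) ^ (-α) := Real.rpow_pos_of_pos hk0 _
      obtain ⟨hml, hmu⟩ := aux_mvt_bounds hα0 hα1 hk1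
      have e1 : b * ((k:ℝ) + 1) ^ (-α) ≤ d k := by
        have := mul_le_mul_of_nonneg_left hml hba.le
        rw [hd_def]
        calc b * ((k:ℝ) + 1) ^ (-α) = (b / (1 - α)) * ((1 - α) * ((k:ℝ) + 1) ^ (-α)) := by
              field_simp
          _ ≤ _ := this
      calc ((k : ℝ) + 1) ^ (-α) / (k : ℝ) ^ (-α)
          = (b * ((k:ℝ) + 1) ^ (-α)) / (b * (k : ℝ) ^ (-α)) := by
            rw [mul_div_mul_left _ _ hb.ne']
        _ ≤ d k / (b * (k : ℝ) ^ (-α)) := by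
            exact (div_le_div_iff_of_pos_right (mul_pos hb ht)).mpr e1
    · filter_upwards [eventually_ge_atTop 1] with k hk
      have hk1 : (1:ℝ) ≤ (k:ℝ) := by exact_mod_cast hk
      have hk0 : (0:ℝ) < (k:ℝ) := by linarith
      have ht : (0:ℝ) < (k:ℝ) ^ (-α) := Real.rpow_pos_of_pos hk0 _
      obtain ⟨hml, hmu⟩ := aux_mvt_bounds hα0 hα1 hk1
      rw [div_le_one (mul_pos hb ht)]
      have := mul_le_mul_of_nonneg_left hmu hba.le
      rw [hd_def]
      calc (b / (1 - α)) * (((k:ℝ) + 1) ^ (1 - α) - (k:ℝ) ^ (1 - α))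
          ≤ (b / (1 - α)) * ((1 - α) * (k:ℝ) ^ (-α)) := this
        _ = b * (k : ℝ) ^ (-α) := by field_simp
  -- Step 4 : a k / d k → 1
  have hac : Tendsto (fun k : ℕ => a k / (b * (k : ℝ) ^ (-α))) atTop (nhds 1) := by
    have := step1.mul hasym
    rw [mul_one] at this
    refine this.congr' ?_
    filter_upwards [] with k
    rw [div_mul_div_comm, mul_comm (a k) (eps k),
      mul_div_mul_left _ _ (hepspos k).ne']
  have had : Tendsto (fun k => a k / d k) atTop (nhds 1) := by
    have := hac.div hd_ratio one_ne_zero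
    rw [div_one] at this
    refine this.congr' ?_
    filter_upwards [eventually_ge_atTop 1] with k hk
    have hk0 : (0:ℝ) < (k:ℝ) := by exact_mod_cast hk
    have hc0 : b * (k : ℝ) ^ (-α) ≠ 0 := (mul_pos hb (Real.rpow_pos_of_pos hk0 _)).ne'
    simp only [Pi.div_apply]
    rw [div_div_div_cancel_right₀ hc0]
  -- first conclusion
  have conc1 : Tendsto (fun m : ℕ =>
      (-∫ ω, Real.log (PS m ω) ∂μ) / ((b / (1 - α)) * (m : ℝ) ^ (1 - α)))
      atTop (nhds 1) := by
    have := aux_sum_ratio_tendsto_one (fun k => (hdpos k).le)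
      (Eventually.of_forall fun k => (hdpos k).ne') hdatTop had
    refine this.congr fun m => ?_
    rw [← hL m, ← hdsum m]
  refine ⟨conc1, ?_⟩
  -- second conclusion
  have hinv : Tendsto (fun m : ℕ => (b * (m : ℝ) ^ (-α)) / eps m) atTop (nhds 1) := by
    have := hasym.inv₀ one_ne_zero
    rw [inv_one] at this
    refine this.congr fun m => ?_
    rw [inv_div]
  have := conc1.mul hinv
  rw [mul_one] at this
  refine this.congr' ?_
  filter_upwards [eventually_ge_atTop 1] with m hm
  have hm0 : (0:ℝ) < (m:ℝ) := by exact_mod_cast hm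
  have ht : (0:ℝ) < (m:ℝ) ^ (-α) := Real.rpow_pos_of_pos hm0 _
  have hsplit : (m : ℝ) ^ (1 - α) = (m : ℝ) * (m : ℝ) ^ (-α) := by
    rw [show (1:ℝ) - α = 1 + (-α) by ring, Real.rpow_add hm0, Real.rpow_one]
  set L := -∫ ω, Real.log (PS m ω) ∂μ
  rw [hsplit]
  have he := (hepspos m).ne'
  field_simp
end

section
/- Let H be a countable hypothesis class, P a probability distribution on H, and D a data distribution over X×{0,1}. For any δ ∈ (0,1], with probability at least 1−δ over an i.i.d. sample S of size m, every hypothesis h ∈ H with zero training error on S satisfies ε(h) ≤ (ln(1/P(h)) + ln(1/δ))/m. -/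
open MeasureTheory

/-- Nonuniform SRM / Occam bound: for a countable hypothesis class H with prior P,
with probability ≥ 1-δ over an i.i.d. sample S of size m, every h consistent with
S satisfies ε(h) ≤ (ln(1/P(h)) + ln(1/δ))/m. -/
theorem stmt_9 {X H : Type*} [MeasurableSpace X] [Countable H]
    (D : Measure (X × Bool)) [IsProbabilityMeasure D]
    (hyp : H → X → Bool) (P : H → ℝ)
    (hP0 : ∀ h, 0 < P h) (hPsum : ∑' h, P h = 1)
    (hmeas : ∀ h : H, MeasurableSet {p : X × Bool | hyp h p.1 ≠ p.2})
    (m : ℕ) (hm : 0 < m) (δ : ℝ) (hδ0 : 0 < δ) (hδ1 : δ ≤ 1) :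
    (Measure.pi (fun _ : Fin m => D))
      {S : Fin m → X × Bool | ∀ h : H, (∀ i, hyp h (S i).1 = (S i).2) →
        (D {p : X × Bool | hyp h p.1 ≠ p.2}).toReal ≤
          (Real.log (1 / P h) + Real.log (1 / δ)) / m} ≥
      ENNReal.ofReal (1 - δ) := by
  classical
  set μ := Measure.pi (fun _ : Fin m => D) with hμ
  set err : H → Set (X × Bool) := fun h => {p : X × Bool | hyp h p.1 ≠ p.2} with herr
  set eps : H → ℝ := fun h => (D (err h)).toReal with heps
  set β : H → ℝ := fun h => (Real.log (1 / P h) + Real.log (1 / δ)) / m with hβ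
  set Good : Set (Fin m → X × Bool) :=
    {S | ∀ h : H, (∀ i, hyp h (S i).1 = (S i).2) → eps h ≤ β h} with hGood
  set Bad : H → Set (Fin m → X × Bool) :=
    fun h => {S | β h < eps h ∧ ∀ i, hyp h (S i).1 = (S i).2} with hBad
  have hcover : Set.univ ⊆ Good ∪ ⋃ h, Bad h := by
    intro S _
    by_cases hS : S ∈ Good
    · exact Or.inl hS
    · right
      simp only [hGood, Set.mem_setOf_eq, not_forall] at hS
      obtain ⟨h, hcons, hlt⟩ := hS
      exact Set.mem_iUnion.2 ⟨h, lt_of_not_ge hlt, hcons⟩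
  have hsummable : Summable P := by
    by_contra hs
    rw [tsum_eq_zero_of_not_summable hs] at hPsum
    norm_num at hPsum
  have hBadBound : ∀ h : H, μ (Bad h) ≤ ENNReal.ofReal (P h * δ) := by
    intro h
    by_cases hlt : β h < eps h
    · have hBset : Bad h = Set.pi Set.univ (fun _ : Fin m => (err h)ᶜ) := by
        ext S
        simp only [hBad, Set.mem_setOf_eq, Set.mem_pi, Set.mem_univ, true_implies,
          Set.mem_compl_iff, herr, not_not, hlt, true_and]
      have hD1 : D (err h) ≤ 1 := prob_le_one
      have hεle : eps h ≤ 1 := by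
        rw [heps]
        exact ENNReal.toReal_le_of_le_ofReal one_pos.le (by simpa using hD1)
      have hCompl : D ((err h)ᶜ) = 1 - D (err h) := by
        rw [measure_compl (hmeas h) (measure_ne_top D _), measure_univ]
      have hCval : D ((err h)ᶜ) = ENNReal.ofReal (1 - eps h) := by
        rw [hCompl, heps]
        rw [ENNReal.ofReal_sub _ ENNReal.toReal_nonneg, ENNReal.ofReal_one,
          ENNReal.ofReal_toReal (measure_ne_top D _)]
      have hμBad : μ (Bad h) = (D ((err h)ᶜ)) ^ m := by
        rw [hBset, hμ, Measure.pi_pi, Finset.prod_const, Finset.card_univ, Fintype.card_fin]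
      rw [hμBad, hCval, ← ENNReal.ofReal_pow (by linarith)]
      apply ENNReal.ofReal_le_ofReal
      have h1 : (1 - eps h) ^ m ≤ Real.exp (-eps h) ^ m := by
        apply pow_le_pow_left₀ (by linarith)
        linarith [Real.add_one_le_exp (-eps h)]
      have h2 : Real.exp (-eps h) ^ m = Real.exp (-(m * eps h)) := by
        rw [← Real.exp_nat_mul]; ring_nf
      have hPδ : 0 < P h * δ := mul_pos (hP0 h) hδ0
      have h3 : -(m * eps h) ≤ Real.log (P h * δ) := by
        have hme : β h * m < eps h * m :=
          mul_lt_mul_of_pos_right hlt (by exact_mod_cast hm)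
        have hβm : β h * m = Real.log (1 / P h) + Real.log (1 / δ) := by
          rw [hβ]; field_simp
        rw [Real.log_mul (ne_of_gt (hP0 h)) (ne_of_gt hδ0)]
        rw [hβm, Real.log_div one_ne_zero (ne_of_gt (hP0 h)),
          Real.log_div one_ne_zero (ne_of_gt hδ0), Real.log_one] at hme
        nlinarith
      calc (1 - eps h) ^ m ≤ Real.exp (-(m * eps h)) := by rw [← h2]; exact h1
        _ ≤ Real.exp (Real.log (P h * δ)) := Real.exp_le_exp.2 h3
        _ = P h * δ := Real.exp_log hPδ
    · have : Bad h = ∅ := by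
        ext S; simp [hBad, hlt]
      rw [this]
      simp
  have hBadTotal : μ (⋃ h, Bad h) ≤ ENNReal.ofReal δ := by
    calc μ (⋃ h, Bad h) ≤ ∑' h, μ (Bad h) := measure_iUnion_le _
      _ ≤ ∑' h, ENNReal.ofReal (P h * δ) := ENNReal.tsum_le_tsum hBadBound
      _ = ENNReal.ofReal (∑' h, P h * δ) := by
          rw [ENNReal.ofReal_tsum_of_nonneg (fun h => (mul_pos (hP0 h) hδ0).le)
            (hsummable.mul_right δ)]
      _ = ENNReal.ofReal δ := by rw [tsum_mul_right, hPsum, one_mul]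
  have hone : (1 : ENNReal) ≤ μ Good + ENNReal.ofReal δ := by
    calc (1 : ENNReal) = μ Set.univ := (measure_univ).symm
      _ ≤ μ (Good ∪ ⋃ h, Bad h) := measure_mono hcover
      _ ≤ μ Good + μ (⋃ h, Bad h) := measure_union_le _ _
      _ ≤ μ Good + ENNReal.ofReal δ := add_le_add_right hBadTotal _
  have hsplit : ENNReal.ofReal (1 - δ) + ENNReal.ofReal δ = 1 := by
    rw [← ENNReal.ofReal_add (by linarith) hδ0.le]
    norm_num
  have : ENNReal.ofReal (1 - δ) + ENNReal.ofReal δ ≤ μ Good + ENNReal.ofReal δ := by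
    rw [hsplit]; exact hone
  exact (ENNReal.add_le_add_iff_right ENNReal.ofReal_ne_top).1 this
end

section
/- Marginal-likelihood PAC-Bayes bound: For any prior distribution P on a countable hypothesis space H and any realizable data distribution D, for 0 < δ ≤ 1 and 0 < γ ≤ 1, with probability at least 1−δ over the choice of an i.i.d. sample S of m instances, with probability at least 1−γ over h drawn from the Bayesian posterior Q(h) = P(h)/P(C(S)), it holds that −ln(1 − ε(h)) < (ln(1/P(C(S))) + ln m + ln(1/δ) + ln(1/γ))/(m − 1). -/
open MeasureTheory Classical in
/-- Marginal-likelihood PAC-Bayes bound: for a prior P on a countable hypothesis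
class and a realizable distribution D, with probability ≥ 1-δ over the sample S
of size m, with probability ≥ 1-γ over h drawn from the Bayesian posterior
(prior restricted to the consistent set C(S)),
-ln(1-ε(h)) < (ln(1/P(C(S))) + ln m + ln(1/δ) + ln(1/γ))/(m-1). -/
theorem stmt_13 {X H : Type*} [MeasurableSpace X] [Countable H]
    (D : Measure (X × Bool)) [IsProbabilityMeasure D]
    (hyp : H → X → Bool) (P : H → ℝ)
    (hP0 : ∀ h, 0 < P h) (hPsum : ∑' h, P h = 1)
    (hmeas : ∀ h : H, MeasurableSet {p : X × Bool | hyp h p.1 ≠ p.2})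
    (m : ℕ) (hm : 2 ≤ m) (δ γ : ℝ) (hδ0 : 0 < δ) (hδ1 : δ ≤ 1)
    (hγ0 : 0 < γ) (hγ1 : γ ≤ 1)
    -- realizability: almost surely some hypothesis is consistent with the sample
    (hrealizable : (Measure.pi (fun _ : Fin m => D))
      {S : Fin m → X × Bool | ∃ h : H, ∀ i, hyp h (S i).1 = (S i).2} = 1) :
    (Measure.pi (fun _ : Fin m => D))
      {S : Fin m → X × Bool |
        0 < (∑' h, if (∀ i, hyp h (S i).1 = (S i).2) then P h else 0) ∧
        (∑' h, if ((∀ i, hyp h (S i).1 = (S i).2) ∧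
            -Real.log (1 - (D {p : X × Bool | hyp h p.1 ≠ p.2}).toReal) <
              (Real.log (1 / (∑' h', if (∀ i, hyp h' (S i).1 = (S i).2) then P h' else 0)) +
                Real.log m + Real.log (1 / δ) + Real.log (1 / γ)) / (m - 1))
          then P h else 0) /
          (∑' h, if (∀ i, hyp h (S i).1 = (S i).2) then P h else 0) ≥ 1 - γ} ≥
      ENNReal.ofReal (1 - δ) := by
  classical
  set μ := Measure.pi (fun _ : Fin m => D) with hμdef
  have hPsumm : Summable P := by
    by_contra hs
    rw [tsum_eq_zero_of_not_summable hs] at hPsum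
    norm_num at hPsum
  -- basic notation
  set q : H → ℝ := fun h => 1 - (D {p : X × Bool | hyp h p.1 ≠ p.2}).toReal with hqdef
  have hq0 : ∀ h, 0 ≤ q h := by
    intro h
    have : (D {p : X × Bool | hyp h p.1 ≠ p.2}).toReal ≤ 1 := by
      have h1 : D {p : X × Bool | hyp h p.1 ≠ p.2} ≤ 1 := prob_le_one
      exact ENNReal.toReal_le_of_le_ofReal zero_le_one (by simpa using h1)
    simp only [hqdef]; linarith
  have hq1 : ∀ h, q h ≤ 1 := by
    intro h
    have : 0 ≤ (D {p : X × Bool | hyp h p.1 ≠ p.2}).toReal := ENNReal.toReal_nonneg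
    simp only [hqdef]; linarith
  set A1 : H → Set (X × Bool) := fun h => {p : X × Bool | hyp h p.1 = p.2} with hA1def
  have hA1meas : ∀ h, MeasurableSet (A1 h) := by
    intro h
    have : A1 h = {p : X × Bool | hyp h p.1 ≠ p.2}ᶜ := by
      ext p; simp [hA1def]
    rw [this]; exact (hmeas h).compl
  have hDA1 : ∀ h, D (A1 h) = ENNReal.ofReal (q h) := by
    intro h
    have h1 : A1 h = {p : X × Bool | hyp h p.1 ≠ p.2}ᶜ := by
      ext p; simp [hA1def]
    rw [h1, prob_compl_eq_one_sub (hmeas h)]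
    rw [hqdef]
    rw [ENNReal.ofReal_sub _ ENNReal.toReal_nonneg, ENNReal.ofReal_one,
      ENNReal.ofReal_toReal (measure_ne_top D _)]
  set Cons : H → Set (Fin m → X × Bool) :=
    fun h => {S : Fin m → X × Bool | ∀ i, hyp h (S i).1 = (S i).2} with hConsdef
  have hConsmeas : ∀ h, MeasurableSet (Cons h) := by
    intro h
    have : Cons h = ⋂ i, (fun S : Fin m → X × Bool => S i) ⁻¹' (A1 h) := by
      ext S; simp [hConsdef, hA1def]
    rw [this]
    exact MeasurableSet.iInter fun i => (measurable_pi_apply i) (hA1meas h)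
  have hμCons : ∀ h, μ (Cons h) = (ENNReal.ofReal (q h)) ^ m := by
    intro h
    have : Cons h = Set.pi Set.univ (fun _ : Fin m => A1 h) := by
      ext S; simp [hConsdef, hA1def, Set.mem_univ_pi]
    rw [hμdef, this, Measure.pi_pi]
    simp [hDA1 h, Finset.prod_const]
  -- the auxiliary function u and its integral bound
  set c : H → ℝ := fun h => P h * (δ * γ) / (↑m * q h ^ (m - 1)) with hcdef
  have hc0 : ∀ h, 0 ≤ c h := by
    intro h
    have hm0 : (0:ℝ) ≤ (m:ℝ) := by positivity
    have hqh := hq0 h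
    have hPh := (hP0 h).le
    apply div_nonneg
    · positivity
    · positivity
  set u : (Fin m → X × Bool) → ENNReal :=
    fun S => ∑' h, (Cons h).indicator (fun _ => ENNReal.ofReal (c h)) S with hudef
  have humeas : Measurable u := by
    apply Measurable.ennreal_tsum
    intro h
    exact measurable_const.indicator (hConsmeas h)
  have hmpos : (0:ℝ) < m := by
    have : (2:ℝ) ≤ (m:ℝ) := by exact_mod_cast hm
    linarith
  have hint : ∫⁻ S, u S ∂μ ≤ ENNReal.ofReal (δ * γ / m) := by
    rw [hudef]
    rw [lintegral_tsum fun h => (measurable_const.indicator (hConsmeas h)).aemeasurable]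
    have hterm : ∀ h, ∫⁻ S, (Cons h).indicator (fun _ => ENNReal.ofReal (c h)) S ∂μ
        ≤ ENNReal.ofReal (P h * (δ * γ / m)) := by
      intro h
      rw [lintegral_indicator_const (hConsmeas h), hμCons h]
      rw [← ENNReal.ofReal_pow (hq0 h), ← ENNReal.ofReal_mul (hc0 h)]
      apply ENNReal.ofReal_le_ofReal
      rcases eq_or_lt_of_le (hq0 h) with hq | hq
      · have : q h ^ m = 0 := by
          rw [← hq]; exact zero_pow (by omega)
        rw [this, mul_zero]
        have := (hP0 h).le
        positivity
      · have hqm1 : (0:ℝ) < q h ^ (m - 1) := by positivity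
        have hpow : q h ^ m = q h ^ (m - 1) * q h := by
          rw [← pow_succ]; congr 1; omega
        rw [hcdef]
        simp only
        rw [hpow, div_mul_eq_mul_div, div_le_iff₀ (by positivity)]
        have h1 : q h ≤ 1 := hq1 h
        have h2 : 0 < P h := hP0 h
        have h3 : 0 ≤ δ * γ := by positivity
        calc P h * (δ * γ) * (q h ^ (m - 1) * q h)
            ≤ P h * (δ * γ) * (q h ^ (m - 1) * 1) := by
              apply mul_le_mul_of_nonneg_left _ (by positivity)
              exact mul_le_mul_of_nonneg_left h1 hqm1.le
          _ = P h * (δ * γ / m) * (↑m * q h ^ (m - 1)) := by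
              field_simp
    calc ∑' h, ∫⁻ S, (Cons h).indicator (fun _ => ENNReal.ofReal (c h)) S ∂μ
        ≤ ∑' h, ENNReal.ofReal (P h * (δ * γ / m)) := ENNReal.tsum_le_tsum hterm
      _ = ENNReal.ofReal (∑' h, P h * (δ * γ / m)) := by
          rw [ENNReal.ofReal_tsum_of_nonneg (fun h => by have := (hP0 h).le; positivity)
            (hPsumm.mul_right _)]
      _ = ENNReal.ofReal (δ * γ / m) := by
          rw [tsum_mul_right, hPsum, one_mul]
  -- Markov
  have hmark : μ {S | ENNReal.ofReal γ ≤ u S} ≤ ENNReal.ofReal δ := by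
    have h1 := mul_meas_ge_le_lintegral₀ (μ := μ) humeas.aemeasurable (ENNReal.ofReal γ)
    have h2 : ENNReal.ofReal γ * μ {S | ENNReal.ofReal γ ≤ u S} ≤ ENNReal.ofReal (δ * γ / m) :=
      le_trans h1 hint
    have hγne : ENNReal.ofReal γ ≠ 0 := by
      simp [ENNReal.ofReal_eq_zero, not_le, hγ0]
    have hγnt : ENNReal.ofReal γ ≠ ⊤ := ENNReal.ofReal_ne_top
    have h3 : μ {S | ENNReal.ofReal γ ≤ u S} ≤ ENNReal.ofReal (δ * γ / m) / ENNReal.ofReal γ := by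
      rw [ENNReal.le_div_iff_mul_le (Or.inl hγne) (Or.inl hγnt), mul_comm]
      exact h2
    refine le_trans h3 ?_
    rw [← ENNReal.ofReal_div_of_pos hγ0]
    apply ENNReal.ofReal_le_ofReal
    rw [div_div, mul_comm (m:ℝ) γ, ← div_div, mul_div_assoc, div_self (ne_of_gt hγ0), mul_one]
    exact div_le_self hδ0.le (by exact_mod_cast (by omega : 1 ≤ m))
  -- the key pointwise claim
  set Good : Set (Fin m → X × Bool) :=
    {S : Fin m → X × Bool |
        0 < (∑' h, if (∀ i, hyp h (S i).1 = (S i).2) then P h else 0) ∧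
        (∑' h, if ((∀ i, hyp h (S i).1 = (S i).2) ∧
            -Real.log (1 - (D {p : X × Bool | hyp h p.1 ≠ p.2}).toReal) <
              (Real.log (1 / (∑' h', if (∀ i, hyp h' (S i).1 = (S i).2) then P h' else 0)) +
                Real.log m + Real.log (1 / δ) + Real.log (1 / γ)) / (m - 1))
          then P h else 0) /
          (∑' h, if (∀ i, hyp h (S i).1 = (S i).2) then P h else 0) ≥ 1 - γ} with hGooddef
  have hkey : ∀ S : Fin m → X × Bool, (∃ h0 : H, ∀ i, hyp h0 (S i).1 = (S i).2) →
      u S < ENNReal.ofReal γ → S ∈ Good := by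
    intro S ⟨h0, hh0⟩ hu
    set Z : ℝ := ∑' h, if (∀ i, hyp h (S i).1 = (S i).2) then P h else 0 with hZdef
    have hnn : ∀ h : H, 0 ≤ (if (∀ i, hyp h (S i).1 = (S i).2) then P h else 0) := by
      intro h; split <;> simp [(hP0 _).le]
    have hZsumm : Summable (fun h => if (∀ i, hyp h (S i).1 = (S i).2) then P h else 0) := by
      apply Summable.of_nonneg_of_le hnn _ hPsumm
      intro h; split <;> simp [(hP0 _).le]
    have hZpos : 0 < Z := by
      rw [hZdef]
      apply Summable.tsum_pos hZsumm hnn h0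
      simp [hh0, hP0 h0]
    have hZle1 : Z ≤ 1 := by
      rw [hZdef, ← hPsum]
      apply Summable.tsum_le_tsum _ hZsumm hPsumm
      intro h; split
      · exact le_refl _
      · exact (hP0 h).le
    set Rb : ℝ := (Real.log (1 / Z) + Real.log m + Real.log (1 / δ) + Real.log (1 / γ)) /
      ((m : ℝ) - 1) with hRbdef
    have hm1 : (0:ℝ) < (m:ℝ) - 1 := by
      have : (2:ℝ) ≤ (m:ℝ) := by exact_mod_cast hm
      linarith
    have hRbpos : 0 < Rb := by
      apply div_pos _ hm1
      have h1 : 0 ≤ Real.log (1 / Z) := Real.log_nonneg (one_le_one_div hZpos hZle1)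
      have h2 : 0 < Real.log m := Real.log_pos (by exact_mod_cast (by omega : 1 < m))
      have h3 : 0 ≤ Real.log (1 / δ) := Real.log_nonneg (one_le_one_div hδ0 hδ1)
      have h4 : 0 ≤ Real.log (1 / γ) := Real.log_nonneg (one_le_one_div hγ0 hγ1)
      linarith
    -- per-hypothesis key bound for bad hypotheses
    have hbadkey : ∀ h : H, (∀ i, hyp h (S i).1 = (S i).2) → ¬(-Real.log (q h) < Rb) →
        P h ≤ Z * c h := by
      intro h hcons hbad
      push_neg at hbad
      have hqpos : 0 < q h := by
        rcases eq_or_lt_of_le (hq0 h) with hq | hq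
        · exfalso
          rw [← hq, Real.log_zero, neg_zero] at hbad
          linarith
        · exact hq
      have h1 : Real.log (1 / Z) + Real.log m + Real.log (1 / δ) + Real.log (1 / γ)
          ≤ ((m:ℝ) - 1) * (-Real.log (q h)) := by
        rw [hRbdef] at hbad
        rw [div_le_iff₀ hm1] at hbad
        linarith [hbad]
      have hLHS : Real.log (1 / Z) + Real.log m + Real.log (1 / δ) + Real.log (1 / γ)
          = Real.log ((m:ℝ) / (Z * δ * γ)) := by
        have e1 : Real.log (1 / Z) = -Real.log Z := by rw [one_div, Real.log_inv]
        have e2 : Real.log (1 / δ) = -Real.log δ := by rw [one_div, Real.log_inv]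
        have e3 : Real.log (1 / γ) = -Real.log γ := by rw [one_div, Real.log_inv]
        have e4 : Real.log ((m:ℝ) / (Z * δ * γ))
            = Real.log m - (Real.log Z + Real.log δ + Real.log γ) := by
          rw [Real.log_div (ne_of_gt hmpos) (by positivity),
            Real.log_mul (by positivity) (ne_of_gt hγ0),
            Real.log_mul (ne_of_gt hZpos) (ne_of_gt hδ0)]
        rw [e1, e2, e3, e4]; ring
      have hRHS : ((m:ℝ) - 1) * (-Real.log (q h)) = Real.log ((q h ^ (m - 1))⁻¹) := by
        rw [Real.log_inv, Real.log_pow]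
        have : ((m - 1 : ℕ) : ℝ) = (m:ℝ) - 1 := by
          have : (1:ℕ) ≤ m := by omega
          push_cast [Nat.cast_sub this]
          ring
        rw [this]; ring
      rw [hLHS, hRHS] at h1
      have h2 : (m:ℝ) / (Z * δ * γ) ≤ (q h ^ (m - 1))⁻¹ := by
        rwa [Real.log_le_log_iff (by positivity) (by positivity)] at h1
      have h3 : (m:ℝ) * q h ^ (m - 1) ≤ Z * δ * γ := by
        rw [div_le_iff₀ (by positivity)] at h2
        have hqm : (0:ℝ) < q h ^ (m - 1) := by positivity
        rw [inv_mul_eq_div, le_div_iff₀ hqm] at h2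
        linarith
      rw [hcdef]
      simp only
      rw [mul_div_assoc', le_div_iff₀ (by positivity)]
      nlinarith [(hP0 h).le, hP0 h]
    -- split the sum
    set goodH : H → Prop := fun h =>
      (∀ i, hyp h (S i).1 = (S i).2) ∧
        -Real.log (1 - (D {p : X × Bool | hyp h p.1 ≠ p.2}).toReal) <
          (Real.log (1 / (∑' h', if (∀ i, hyp h' (S i).1 = (S i).2) then P h' else 0)) +
            Real.log m + Real.log (1 / δ) + Real.log (1 / γ)) / ((m:ℝ) - 1) with hgoodHdef
    have hgoodiff : ∀ h, goodH h ↔ ((∀ i, hyp h (S i).1 = (S i).2) ∧ -Real.log (q h) < Rb) := by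
      intro h
      rw [hgoodHdef, hRbdef, hqdef, hZdef]
    set G : ℝ := ∑' h, if goodH h then P h else 0 with hGdef
    set B : ℝ := ∑' h, if ((∀ i, hyp h (S i).1 = (S i).2) ∧ ¬(-Real.log (q h) < Rb))
      then P h else 0 with hBdef
    have hGsumm : Summable (fun h => if goodH h then P h else 0) := by
      apply Summable.of_nonneg_of_le (fun h => by split <;> simp [(hP0 _).le]) _ hPsumm
      intro h; split <;> simp [(hP0 _).le]
    have hBsumm : Summable (fun h => if ((∀ i, hyp h (S i).1 = (S i).2) ∧
        ¬(-Real.log (q h) < Rb)) then P h else 0) := by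
      apply Summable.of_nonneg_of_le (fun h => by split <;> simp [(hP0 _).le]) _ hPsumm
      intro h; split <;> simp [(hP0 _).le]
    have hsplit : Z = G + B := by
      rw [hZdef, hGdef, hBdef, ← Summable.tsum_add hGsumm hBsumm]
      apply tsum_congr
      intro h
      by_cases hcons : (∀ i, hyp h (S i).1 = (S i).2)
      · rw [if_pos hcons]
        by_cases hg : -Real.log (q h) < Rb
        · rw [if_pos ((hgoodiff h).2 ⟨hcons, hg⟩),
            if_neg (show ¬((∀ i, hyp h (S i).1 = (S i).2) ∧ ¬(-Real.log (q h) < Rb)) from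
              fun hc => hc.2 hg), add_zero]
        · rw [if_neg (show ¬ goodH h from fun hgh => hg ((hgoodiff h).1 hgh).2),
            if_pos ⟨hcons, hg⟩, zero_add]
      · rw [if_neg hcons,
          if_neg (show ¬ goodH h from fun hgh => hcons ((hgoodiff h).1 hgh).1),
          if_neg (show ¬((∀ i, hyp h (S i).1 = (S i).2) ∧ ¬(-Real.log (q h) < Rb)) from
            fun hc => hcons hc.1), add_zero]
    -- bound B using u S
    have hufin : u S ≠ ⊤ := (lt_of_lt_of_le hu le_top).ne
    have hUsumm : Summable (fun h => if (∀ i, hyp h (S i).1 = (S i).2) then c h else 0) := by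
      have h1 := ENNReal.summable_toReal hufin
      apply h1.congr
      intro h
      by_cases hcons : (∀ i, hyp h (S i).1 = (S i).2)
      · simp [Set.indicator_of_mem, hcons, hConsdef, Set.mem_setOf_eq,
          ENNReal.toReal_ofReal (hc0 h)]
      · simp [Set.indicator_of_notMem, hcons, hConsdef, Set.mem_setOf_eq]
    have hUval : (u S).toReal = ∑' h, if (∀ i, hyp h (S i).1 = (S i).2) then c h else 0 := by
      rw [hudef]
      rw [ENNReal.tsum_toReal_eq (fun h => by
        by_cases hcons : S ∈ Cons h
        · simp [Set.indicator_of_mem hcons]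
        · simp [Set.indicator_of_notMem hcons])]
      apply tsum_congr
      intro h
      by_cases hcons : (∀ i, hyp h (S i).1 = (S i).2)
      · simp [Set.indicator_of_mem, hcons, hConsdef, Set.mem_setOf_eq,
          ENNReal.toReal_ofReal (hc0 h)]
      · simp [Set.indicator_of_notMem, hcons, hConsdef, Set.mem_setOf_eq]
    have hUle : (∑' h, if (∀ i, hyp h (S i).1 = (S i).2) then c h else 0) ≤ γ := by
      rw [← hUval]
      exact ENNReal.toReal_le_of_le_ofReal hγ0.le hu.le
    have hBle : B ≤ γ * Z := by
      have h1 : B ≤ Z * ∑' h, if (∀ i, hyp h (S i).1 = (S i).2) then c h else 0 := by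
        rw [hBdef, ← tsum_mul_left]
        apply Summable.tsum_le_tsum _ hBsumm (hUsumm.mul_left Z)
        intro h
        by_cases hcons : (∀ i, hyp h (S i).1 = (S i).2)
        · rw [if_pos hcons]
          by_cases hg : -Real.log (q h) < Rb
          · rw [if_neg (show ¬((∀ i, hyp h (S i).1 = (S i).2) ∧ ¬(-Real.log (q h) < Rb)) from
              fun hc => hc.2 hg)]
            have := hc0 h
            positivity
          · rw [if_pos ⟨hcons, hg⟩]
            exact hbadkey h hcons hg
        · rw [if_neg hcons, mul_zero,
            if_neg (show ¬((∀ i, hyp h (S i).1 = (S i).2) ∧ ¬(-Real.log (q h) < Rb)) from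
              fun hc => hcons hc.1)]
      have h2 : Z * (∑' h, if (∀ i, hyp h (S i).1 = (S i).2) then c h else 0) ≤ Z * γ :=
        mul_le_mul_of_nonneg_left hUle hZpos.le
      calc B ≤ Z * γ := le_trans h1 h2
        _ = γ * Z := mul_comm _ _
    -- conclude
    constructor
    · exact hZpos
    · show (∑' h, if goodH h then P h else 0) / Z ≥ 1 - γ
      rw [ge_iff_le, le_div_iff₀ hZpos]
      have : G = Z - B := by linarith [hsplit]
      rw [← hGdef, this]
      nlinarith [hBle, hZpos]
  -- assemble
  set R : Set (Fin m → X × Bool) :=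
    {S : Fin m → X × Bool | ∃ h : H, ∀ i, hyp h (S i).1 = (S i).2} with hRdef
  have hRmeas : MeasurableSet R := by
    have : R = ⋃ h : H, Cons h := by
      ext S; simp [hRdef, hConsdef]
    rw [this]
    exact MeasurableSet.iUnion fun h => hConsmeas h
  have hRc : μ Rᶜ = 0 := by
    rw [prob_compl_eq_zero_iff hRmeas]
    exact hrealizable
  have hincl : Goodᶜ ⊆ Rᶜ ∪ {S | ENNReal.ofReal γ ≤ u S} := by
    intro S hS
    by_cases hSR : S ∈ R
    · right
      by_contra hlt
      simp only [Set.mem_setOf_eq, not_le] at hlt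
      exact hS (hkey S hSR hlt)
    · left; exact hSR
  have hGc : μ Goodᶜ ≤ ENNReal.ofReal δ := by
    calc μ Goodᶜ ≤ μ (Rᶜ ∪ {S | ENNReal.ofReal γ ≤ u S}) := measure_mono hincl
      _ ≤ μ Rᶜ + μ {S | ENNReal.ofReal γ ≤ u S} := measure_union_le _ _
      _ = μ {S | ENNReal.ofReal γ ≤ u S} := by rw [hRc, zero_add]
      _ ≤ ENNReal.ofReal δ := hmark
  have h1 : (1:ENNReal) ≤ μ Good + μ Goodᶜ := by
    have : (1:ENNReal) = μ (Good ∪ Goodᶜ) := by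
      rw [Set.union_compl_self]
      exact (measure_univ).symm
    rw [this]
    exact measure_union_le _ _
  have h2 : (1:ENNReal) ≤ μ Good + ENNReal.ofReal δ :=
    le_trans h1 (add_le_add_right hGc _)
  have h3 : (1:ENNReal) - ENNReal.ofReal δ ≤ μ Good := by
    rw [tsub_le_iff_right]
    exact h2
  calc ENNReal.ofReal (1 - δ) = 1 - ENNReal.ofReal δ := by
        rw [ENNReal.ofReal_sub _ hδ0.le, ENNReal.ofReal_one]
    _ ≤ μ Good := h3
end
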